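/- arXiv:1612.01015 — 3 statements merged into one kernel-verified Lean document; each statement's English description precedes it below -/
import Mathlib

section
/- For all natural numbers j, k: (x₁² + x₂²)^{j+k} expanded yields Σ_{j+k=s} binom(s, j) x₁^{2j} x₂^{2k}, and consequently for b₁, b₂ < 0 the double series Σ_{j,k≥0} binom(j+k, j) ((2(j+k)−1)!!/(2(j+k))!!) ∬_{x₁²+x₂²<1} x₁^{2j+n} x₂^{2k+m} exp(b₁x₁² + b₂x₂²) dx₁dx₂ converges absolutely and equals ∬_{x₁²+x₂²<1} x₁^n x₂^m exp(b₁x₁²+b₂x₂²)/√(1−x₁²−x₂²) dx₁dx₂. -/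
open Real Nat MeasureTheory

namespace DiskAux

noncomputable def dd (s : ℕ) : ℝ := ((2 * s - 1)‼ : ℝ) / ((2 * s)‼ : ℝ)

lemma df_le_succ : ∀ n : ℕ, n‼ ≤ (n + 1)‼
  | 0 => le_refl _
  | 1 => by norm_num [Nat.doubleFactorial]
  | n + 2 => by
      rw [Nat.doubleFactorial_add_two, show n + 2 + 1 = n + 1 + 2 from rfl,
        Nat.doubleFactorial_add_two]
      exact Nat.mul_le_mul (by omega) (df_le_succ n)

lemma dd_nonneg (s : ℕ) : 0 ≤ dd s := by
  unfold dd; positivity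

lemma dd_pos (s : ℕ) : 0 < dd s := by
  unfold dd
  have h1 : 0 < ((2 * s - 1)‼ : ℝ) := by exact_mod_cast Nat.doubleFactorial_pos _
  have h2 : 0 < ((2 * s)‼ : ℝ) := by exact_mod_cast Nat.doubleFactorial_pos _
  positivity

lemma dd_le_one (s : ℕ) : dd s ≤ 1 := by
  have h : (2 * s - 1)‼ ≤ (2 * s)‼ := by
    cases s with
    | zero => simp
    | succ s =>
      have h := df_le_succ (2 * s + 1)
      have e1 : 2 * (s + 1) - 1 = 2 * s + 1 := by omega
      have e2 : 2 * (s + 1) = 2 * s + 1 + 1 := by omega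
      rw [e1, e2]; exact h
  rw [dd, div_le_one (by exact_mod_cast Nat.doubleFactorial_pos _)]
  exact_mod_cast h

lemma dd_rec (s : ℕ) : ((s : ℝ) + 1) * dd (s + 1) = dd s * (2 * s + 1) / 2 := by
  have e1 : 2 * (s + 1) - 1 = 2 * s + 1 := by omega
  have e2 : (2 * s + 1)‼ = (2 * s + 1) * (2 * s - 1)‼ := by
    simpa using Nat.doubleFactorial_add_one (2 * s)
  have e3 : (2 * (s + 1))‼ = (2 * s + 2) * (2 * s)‼ := by
    rw [show 2 * (s + 1) = 2 * s + 2 from by omega]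
    exact Nat.doubleFactorial_add_two (2 * s)
  have h1 : ((2 * s)‼ : ℝ) ≠ 0 := by
    exact_mod_cast (Nat.doubleFactorial_pos _).ne'
  rw [dd, dd, e1, e2, e3]
  push_cast
  field_simp

lemma expand (x y : ℝ) (s : ℕ) : (x ^ 2 + y ^ 2) ^ s =
    ∑ j ∈ Finset.range (s + 1), (s.choose j : ℝ) * x ^ (2 * j) * y ^ (2 * (s - j)) := by
  rw [add_pow]
  exact Finset.sum_congr rfl fun j hj => by rw [pow_mul, pow_mul]; ring



lemma abs_dd (s : ℕ) : |dd s| = dd s := abs_of_nonneg (dd_nonneg s)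

lemma summable_dd_pow {x : ℝ} (hx : |x| < 1) : Summable (fun s => dd s * x ^ s) := by
  apply Summable.of_norm_bounded (summable_geometric_of_lt_one (abs_nonneg x) hx)
  intro s
  rw [Real.norm_eq_abs, abs_mul, abs_pow, abs_dd]
  calc dd s * |x| ^ s ≤ 1 * |x| ^ s := by gcongr; exact dd_le_one s
  _ = |x| ^ s := one_mul _

lemma hasSum_dd {t : ℝ} (h0 : 0 ≤ t) (h1 : t < 1) :
    HasSum (fun s => dd s * t ^ s) (1 / Real.sqrt (1 - t)) := by
  set r : ℝ := (1 + t) / 2 with hr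
  have hr0 : 0 < r := by rw [hr]; linarith
  have htr : t < r := by rw [hr]; linarith
  have hr1 : r < 1 := by rw [hr]; linarith
  set u : ℕ → ℝ := fun s => (s : ℝ) * r ^ (s - 1) with hu_def
  have hu : Summable u := by
    rw [← summable_nat_add_iff 1]
    have h1' : Summable fun s : ℕ => (s : ℝ) * r ^ s := by
      simpa using summable_pow_mul_geometric_of_norm_lt_one 1
        (r := r) (by rw [Real.norm_eq_abs, abs_of_pos hr0]; exact hr1)
    have h2' : Summable fun s : ℕ => r ^ s :=
      summable_geometric_of_lt_one hr0.le hr1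
    have := (h1'.add h2')
    apply this.congr
    intro s
    simp [hu_def]
    push_cast
    ring
  have hbound : ∀ (s : ℕ) (z : ℝ), z ∈ Set.Ioo (-r) r →
      ‖dd s * ((s : ℝ) * z ^ (s - 1))‖ ≤ u s := by
    intro s z hz
    have hz' : |z| ≤ r := le_of_lt (abs_lt.2 ⟨hz.1, hz.2⟩)
    rw [Real.norm_eq_abs, abs_mul, abs_mul, abs_pow, Nat.abs_cast, abs_dd]
    calc dd s * ((s : ℝ) * |z| ^ (s - 1)) ≤ 1 * ((s : ℝ) * r ^ (s - 1)) := by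
          apply mul_le_mul (dd_le_one s) ?_ ?_ zero_le_one
          · exact mul_le_mul_of_nonneg_left (pow_le_pow_left₀ (abs_nonneg z) hz' _)
              (Nat.cast_nonneg s)
          · positivity
    _ = u s := one_mul _
  have hg0 : Summable fun s => dd s * (0 : ℝ) ^ s := by
    apply summable_of_ne_finset_zero (s := ({0} : Finset ℕ))
    intro s hs
    simp at hs
    simp [zero_pow hs]
  have hderiv : ∀ y ∈ Set.Ioo (-r) r, HasDerivAt (fun z => ∑' s, dd s * z ^ s)
      (∑' s, dd s * ((s : ℝ) * y ^ (s - 1))) y := by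
    intro y hy
    exact hasDerivAt_tsum_of_isPreconnected hu isOpen_Ioo (convex_Ioo _ _).isPreconnected
      (fun s z _ => (hasDerivAt_pow s z).const_mul (dd s))
      hbound (Set.mem_Ioo.2 ⟨by linarith, hr0⟩) hg0 hy
  -- the key identity
  have key : ∀ x ∈ Set.Icc (0 : ℝ) t,
      (1 - x) * (∑' s, dd s * ((s : ℝ) * x ^ (s - 1))) = (∑' s, dd s * x ^ s) / 2 := by
    intro x hx
    have hx1 : |x| < 1 := by rw [abs_of_nonneg hx.1]; linarith [hx.2]
    have hxr : x ∈ Set.Ioo (-r) r := ⟨by linarith [hx.1], by linarith [hx.2]⟩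
    have hS : Summable (fun s => dd s * ((s : ℝ) * x ^ (s - 1))) :=
      hu.of_norm_bounded (fun s => hbound s x hxr)
    have hD := hS.hasSum
    set Dx := ∑' s, dd s * ((s : ℝ) * x ^ (s - 1)) with hDx
    have h1 : HasSum (fun s => dd (s + 1) * (((s : ℝ) + 1) * x ^ s)) Dx := by
      have h := (hasSum_nat_add_iff' (f := fun s => dd s * ((s : ℝ) * x ^ (s - 1))) 1).mpr hD
      simp only [Finset.range_one, Finset.sum_singleton, Nat.cast_zero, zero_mul, mul_zero,
        sub_zero, Nat.cast_ofNat] at h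
      convert h using 2 with s
      · rfl
      push_cast
      simp
    have h2 : HasSum (fun s => dd s * ((s : ℝ) * x ^ (s - 1)) * x) (Dx * x) := hD.mul_right x
    have e2 : (fun s => dd s * ((s : ℝ) * x ^ (s - 1)) * x) =
        fun s => dd s * ((s : ℝ) * x ^ s) := by
      funext s
      cases s with
      | zero => simp
      | succ s => simp [pow_succ]; ring
    rw [e2] at h2
    have h3 := h1.sub h2
    have e3 : (fun s => dd (s + 1) * (((s : ℝ) + 1) * x ^ s) - dd s * ((s : ℝ) * x ^ s)) =
        fun s => dd s * x ^ s / 2 := by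
      funext s
      have h := dd_rec s
      have : dd (s + 1) * (((s : ℝ) + 1) * x ^ s) = (((s : ℝ) + 1) * dd (s + 1)) * x ^ s := by ring
      rw [this, h]
      ring
    rw [e3] at h3
    have h4 : HasSum (fun s => dd s * x ^ s / 2) ((∑' s, dd s * x ^ s) / 2) :=
      (summable_dd_pow hx1).hasSum.div_const 2
    have := h3.unique h4
    rw [← this]
    ring
  -- derivative of G is zero
  have hG : ∀ x ∈ Set.Icc (0 : ℝ) t,
      HasDerivAt (fun z => Real.sqrt (1 - z) * ∑' s, dd s * z ^ s) 0 x := by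
    intro x hx
    have hx1 : x < 1 := lt_of_le_of_lt hx.2 h1
    have hxr : x ∈ Set.Ioo (-r) r := ⟨by linarith [hx.1], by linarith [hx.2]⟩
    have hpos : 0 < 1 - x := by linarith
    have hsq : HasDerivAt (fun z : ℝ => Real.sqrt (1 - z)) (-(1 / (2 * Real.sqrt (1 - x)))) x := by
      have h := (Real.hasDerivAt_sqrt (ne_of_gt hpos)).comp x ((hasDerivAt_id x).const_sub 1)
      refine h.congr_deriv ?_
      simp
    have hf' := hderiv x hxr
    have hmul := hsq.mul hf'
    have hs0 : Real.sqrt (1 - x) ≠ 0 := (Real.sqrt_pos.2 hpos).ne'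
    have hsq2 : Real.sqrt (1 - x) ^ 2 = 1 - x := Real.sq_sqrt hpos.le
    have hkey := key x hx
    refine hmul.congr_deriv ?_
    have hDval : (∑' s, dd s * ((s : ℝ) * x ^ (s - 1))) =
        (∑' s, dd s * x ^ s) / (2 * (1 - x)) := by
      field_simp at hkey ⊢
      linarith [hkey]
    rw [hDval]
    have e : Real.sqrt (1 - x) * ((∑' s, dd s * x ^ s) / (2 * (1 - x))) =
        1 / (2 * Real.sqrt (1 - x)) * (∑' s, dd s * x ^ s) := by
      field_simp
      linear_combination (∑' (s : ℕ), dd s * x ^ s) * hsq2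
    rw [e]
    ring
  -- FTC
  have hFTC := intervalIntegral.integral_eq_sub_of_hasDerivAt
    (f := fun z => Real.sqrt (1 - z) * ∑' s, dd s * z ^ s) (f' := fun _ => (0 : ℝ))
    (a := 0) (b := t)
    (by rwa [Set.uIcc_of_le h0]) (intervalIntegrable_const)
  simp only [intervalIntegral.integral_const, smul_zero, smul_eq_mul, mul_zero] at hFTC
  have hf0 : (∑' s, dd s * (0 : ℝ) ^ s) = 1 := by
    rw [tsum_eq_single 0 (fun s hs => by simp [zero_pow hs])]
    simp [dd]
  rw [sub_zero, hf0, Real.sqrt_one, mul_one] at hFTC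
  have hft : (∑' s, dd s * t ^ s) = 1 / Real.sqrt (1 - t) := by
    have hs0 : Real.sqrt (1 - t) ≠ 0 := (Real.sqrt_pos.2 (by linarith)).ne'
    field_simp
    linarith [hFTC]
  have := (summable_dd_pow (by rwa [abs_of_nonneg h0])).hasSum
  rwa [hft] at this



lemma hasSum_prod {x y : ℝ} (h : x ^ 2 + y ^ 2 < 1) :
    HasSum (fun jk : ℕ × ℕ => ((jk.1 + jk.2).choose jk.1 : ℝ) * dd (jk.1 + jk.2) *
      (x ^ (2 * jk.1) * y ^ (2 * jk.2))) (1 / Real.sqrt (1 - x ^ 2 - y ^ 2)) := by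
  set u : ℕ × ℕ → ℝ := fun jk => ((jk.1 + jk.2).choose jk.1 : ℝ) * dd (jk.1 + jk.2) *
      (x ^ (2 * jk.1) * y ^ (2 * jk.2)) with hu
  have hxp : ∀ (z : ℝ) (a : ℕ), 0 ≤ z ^ (2 * a) := fun z a => by
    rw [pow_mul]; positivity
  have upos : ∀ jk : ℕ × ℕ, 0 ≤ u jk := fun jk =>
    mul_nonneg (mul_nonneg (Nat.cast_nonneg _) (dd_nonneg _))
      (mul_nonneg (hxp x _) (hxp y _))
  have h0 : (0 : ℝ) ≤ x ^ 2 + y ^ 2 := by positivity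
  -- fiber sums
  have hb : ∀ s : ℕ, ∑ p ∈ Finset.HasAntidiagonal.antidiagonal s, u p = dd s * (x ^ 2 + y ^ 2) ^ s := by
    intro s
    rw [Finset.Nat.sum_antidiagonal_eq_sum_range_succ_mk]
    rw [expand x y s, Finset.mul_sum]
    apply Finset.sum_congr rfl
    intro j hj
    simp only [hu]
    rw [Nat.add_sub_cancel' (Nat.lt_succ_iff.mp (Finset.mem_range.mp hj))]
    ring
  set σ := Finset.HasAntidiagonal.sigmaAntidiagonalEquivProd (A := ℕ) with hσ
  have hfib : ∀ s : ℕ, ∑' c : (Finset.HasAntidiagonal.antidiagonal s : Finset (ℕ × ℕ)), u (σ ⟨s, c⟩)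
      = dd s * (x ^ 2 + y ^ 2) ^ s := by
    intro s
    have : ∀ c : (Finset.HasAntidiagonal.antidiagonal s : Finset (ℕ × ℕ)), u (σ ⟨s, c⟩) = u c := by
      intro c; rfl
    calc (∑' c : (Finset.HasAntidiagonal.antidiagonal s : Finset (ℕ × ℕ)), u (σ ⟨s, c⟩))
        = ∑' c : (Finset.HasAntidiagonal.antidiagonal s : Finset (ℕ × ℕ)), u c := by
          exact tsum_congr this
      _ = ∑ p ∈ Finset.HasAntidiagonal.antidiagonal s, u p := Finset.tsum_subtype _ u
      _ = dd s * (x ^ 2 + y ^ 2) ^ s := hb s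
  have hsig : Summable (fun q : (Σ s : ℕ, (Finset.HasAntidiagonal.antidiagonal s : Finset (ℕ × ℕ))) => u (σ q)) := by
    rw [summable_sigma_of_nonneg (fun q => upos _)]
    refine ⟨fun s => (hasSum_fintype _).summable, ?_⟩
    apply Summable.congr (hasSum_dd h0 h).summable
    intro s
    exact (hfib s).symm
  have hsum : Summable u := σ.summable_iff.mp hsig
  have htsum : ∑' jk, u jk = 1 / Real.sqrt (1 - x ^ 2 - y ^ 2) := by
    rw [← σ.tsum_eq u]
    rw [Summable.tsum_sigma' (fun s => (hasSum_fintype _).summable) hsig]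
    calc ∑' (s : ℕ) (c : (Finset.HasAntidiagonal.antidiagonal s : Finset (ℕ × ℕ))), u (σ ⟨s, c⟩)
        = ∑' s : ℕ, dd s * (x ^ 2 + y ^ 2) ^ s := tsum_congr hfib
      _ = 1 / Real.sqrt (1 - (x ^ 2 + y ^ 2)) := (hasSum_dd h0 h).tsum_eq
      _ = 1 / Real.sqrt (1 - x ^ 2 - y ^ 2) := by rw [sub_sub]
  have := hsum.hasSum
  rwa [htsum] at this



def Dset : Set (ℝ × ℝ) := {p | p.1 ^ 2 + p.2 ^ 2 < 1}

lemma measD : MeasurableSet Dset := by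
  have : IsOpen Dset := isOpen_lt (by fun_prop) continuous_const
  exact this.measurableSet

lemma volD : volume Dset < ⊤ := by
  have hsub : Dset ⊆ Set.Icc ((-1, -1) : ℝ × ℝ) (1, 1) := by
    rintro ⟨x, y⟩ hp
    simp only [Dset, Set.mem_setOf_eq] at hp
    refine ⟨⟨?_, ?_⟩, ?_, ?_⟩ <;> dsimp only <;> nlinarith [sq_nonneg x, sq_nonneg y]
  exact lt_of_le_of_lt (measure_mono hsub) isCompact_Icc.measure_lt_top

lemma integrableOn_D {f : ℝ × ℝ → ℝ} (hf : Continuous f) (hb : ∀ p ∈ Dset, |f p| ≤ 1) :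
    IntegrableOn f Dset := by
  apply Measure.integrableOn_of_bounded volD.ne hf.aestronglyMeasurable (M := 1)
  exact (ae_restrict_iff' measD).mpr (ae_of_all _ fun p hp => by
    simpa [Real.norm_eq_abs] using hb p hp)

-- the arcsin antiderivative computation
lemma arcsin_integral {c : ℝ} (hc : 0 < c) :
    IntegrableOn (fun y => 1 / Real.sqrt (c ^ 2 - y ^ 2)) (Set.Ioo (-c) c) ∧
    ∫ y in Set.Ioo (-c) c, 1 / Real.sqrt (c ^ 2 - y ^ 2) = π := by
  have hcont : ContinuousOn (fun y => Real.arcsin (y / c)) (Set.Icc (-c) c) :=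
    (Real.continuous_arcsin.comp (continuous_id.div_const c)).continuousOn
  have hderiv : ∀ y ∈ Set.Ioo (-c) c,
      HasDerivAt (fun y => Real.arcsin (y / c)) (1 / Real.sqrt (c ^ 2 - y ^ 2)) y := by
    intro y hy
    have hy1 : -1 < y / c := by
      rw [lt_div_iff₀ hc]; nlinarith [hy.1]
    have hy2 : y / c < 1 := by
      rw [div_lt_iff₀ hc]; nlinarith [hy.2]
    have h := (Real.hasDerivAt_arcsin hy1.ne' hy2.ne).comp y ((hasDerivAt_id y).div_const c)
    refine h.congr_deriv ?_
    have h1 : 1 - (y / c) ^ 2 = (c ^ 2 - y ^ 2) / c ^ 2 := by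
      field_simp
    have hs : Real.sqrt (c ^ 2 - y ^ 2) ≠ 0 :=
      (Real.sqrt_pos.2 (by nlinarith [hy.1, hy.2])).ne'
    rw [h1, Real.sqrt_div (by nlinarith [hy.1, hy.2]) (c ^ 2),
      Real.sqrt_sq hc.le]
    field_simp
  have hnn : ∀ y ∈ Set.Ioo (-c) c, 0 ≤ 1 / Real.sqrt (c ^ 2 - y ^ 2) := fun y _ => by positivity
  have hint : IntegrableOn (fun y => 1 / Real.sqrt (c ^ 2 - y ^ 2)) (Set.Ioo (-c) c) :=
    (intervalIntegral.integrableOn_deriv_of_nonneg hcont hderiv hnn).mono_set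
      Set.Ioo_subset_Ioc_self
  refine ⟨hint, ?_⟩
  have hle : (-c) ≤ c := by linarith
  have hii : IntervalIntegrable (fun y => 1 / Real.sqrt (c ^ 2 - y ^ 2)) volume (-c) c :=
    (intervalIntegrable_iff_integrableOn_Ioo_of_le hle).mpr hint
  have hFTC := intervalIntegral.integral_eq_sub_of_hasDeriv_right_of_le hle hcont
    (fun y hy => (hderiv y hy).hasDerivWithinAt) hii
  rw [intervalIntegral.integral_of_le hle, integral_Ioc_eq_integral_Ioo] at hFTC
  rw [hFTC, div_self hc.ne', neg_div, div_self hc.ne', Real.arcsin_one, Real.arcsin_neg,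
    Real.arcsin_one]
  ring

lemma intK : IntegrableOn (fun p : ℝ × ℝ => 1 / Real.sqrt (1 - p.1 ^ 2 - p.2 ^ 2)) Dset := by
  have hmeas : Measurable fun p : ℝ × ℝ => 1 / Real.sqrt (1 - p.1 ^ 2 - p.2 ^ 2) := by
    simp only [one_div]
    exact (Real.continuous_sqrt.comp (by fun_prop)).measurable.inv
  constructor
  · exact hmeas.aestronglyMeasurable
  · rw [hasFiniteIntegral_iff_norm]
    have key : ∀ x : ℝ, (∫⁻ y, Set.indicator Dset
          (fun p : ℝ × ℝ => ENNReal.ofReal ‖1 / Real.sqrt (1 - p.1 ^ 2 - p.2 ^ 2)‖) (x, y))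
        ≤ Set.indicator (Set.Ioo (-1 : ℝ) 1) (fun _ => ENNReal.ofReal π) x := by
      intro x
      by_cases hx : x ^ 2 < 1
      · have hx1 : x ∈ Set.Ioo (-1 : ℝ) 1 := by
          constructor <;> nlinarith
        set c := Real.sqrt (1 - x ^ 2) with hc
        have hcpos : 0 < c := Real.sqrt_pos.2 (by nlinarith)
        have hc2 : c ^ 2 = 1 - x ^ 2 := Real.sq_sqrt (by nlinarith)
        have hset : {y : ℝ | (x, y) ∈ Dset} = Set.Ioo (-c) c := by
          ext y
          simp only [Dset, Set.mem_setOf_eq, Set.mem_Ioo]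
          constructor
          · intro h; constructor <;> nlinarith
          · intro h; nlinarith [h.1, h.2]
        have heq : (fun y => Set.indicator Dset
              (fun p : ℝ × ℝ => ENNReal.ofReal ‖1 / Real.sqrt (1 - p.1 ^ 2 - p.2 ^ 2)‖) (x, y))
            = Set.indicator (Set.Ioo (-c) c)
              (fun y => ENNReal.ofReal (1 / Real.sqrt (c ^ 2 - y ^ 2))) := by
          funext y
          by_cases hy : (x, y) ∈ Dset
          · rw [Set.indicator_of_mem hy, Set.indicator_of_mem (hset ▸ hy : y ∈ Set.Ioo (-c) c)]
            have he : (1 : ℝ) - x ^ 2 - y ^ 2 = c ^ 2 - y ^ 2 := by rw [hc2]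
            rw [Real.norm_eq_abs, abs_of_nonneg (by positivity), he]
          · rw [Set.indicator_of_notMem hy, Set.indicator_of_notMem
              (fun hmem => hy (by rw [← hset] at hmem; exact hmem))]
        rw [heq, Set.indicator_of_mem hx1]
        rw [lintegral_indicator measurableSet_Ioo]
        have := arcsin_integral hcpos
        rw [← ofReal_integral_eq_lintegral_ofReal this.1
          (ae_of_all _ fun y => by positivity)]
        rw [this.2]
      · have : ∀ y : ℝ, (x, y) ∉ Dset := by
          intro y hmem
          simp only [Dset, Set.mem_setOf_eq] at hmem
          nlinarith [sq_nonneg y]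
        simp only [fun y => Set.indicator_of_notMem (this y)
          (fun p : ℝ × ℝ => ENNReal.ofReal ‖1 / Real.sqrt (1 - p.1 ^ 2 - p.2 ^ 2)‖)]
        simp
    calc ∫⁻ p in Dset, ENNReal.ofReal ‖1 / Real.sqrt (1 - p.1 ^ 2 - p.2 ^ 2)‖
        = ∫⁻ p : ℝ × ℝ, Set.indicator Dset
            (fun p : ℝ × ℝ => ENNReal.ofReal ‖1 / Real.sqrt (1 - p.1 ^ 2 - p.2 ^ 2)‖) p := by
          rw [lintegral_indicator measD]
      _ = ∫⁻ x : ℝ, ∫⁻ y : ℝ, Set.indicator Dset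
            (fun p : ℝ × ℝ => ENNReal.ofReal ‖1 / Real.sqrt (1 - p.1 ^ 2 - p.2 ^ 2)‖) (x, y) := by
          rw [MeasureTheory.Measure.volume_eq_prod, lintegral_prod]
          exact ((ENNReal.measurable_ofReal.comp hmeas.norm).indicator measD).aemeasurable
      _ ≤ ∫⁻ x : ℝ, Set.indicator (Set.Ioo (-1 : ℝ) 1) (fun _ => ENNReal.ofReal π) x :=
          lintegral_mono key
      _ = ENNReal.ofReal π * volume (Set.Ioo (-1 : ℝ) 1) := by
          rw [lintegral_indicator measurableSet_Ioo, setLIntegral_const]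
      _ < ⊤ := by
          rw [Real.volume_Ioo]
          exact ENNReal.mul_lt_top ENNReal.ofReal_lt_top ENNReal.ofReal_lt_top



section
variable {b₁ b₂ : ℝ}

lemma exp_le_one (hb₁ : b₁ < 0) (hb₂ : b₂ < 0) (x y : ℝ) :
    Real.exp (b₁ * x ^ 2 + b₂ * y ^ 2) ≤ 1 := by
  rw [← Real.exp_zero]
  apply Real.exp_le_exp.mpr
  nlinarith [sq_nonneg x, sq_nonneg y]

lemma abs_le_one_of_mem {p : ℝ × ℝ} (hp : p ∈ Dset) : |p.1| ≤ 1 ∧ |p.2| ≤ 1 := by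
  have h : p.1 ^ 2 + p.2 ^ 2 < 1 := hp
  constructor <;> nlinarith [sq_nonneg p.1, sq_nonneg p.2, sq_abs p.1, sq_abs p.2,
    abs_nonneg p.1, abs_nonneg p.2]

lemma int_main (hb₁ : b₁ < 0) (hb₂ : b₂ < 0) (a b : ℕ) :
    IntegrableOn (fun p : ℝ × ℝ =>
      p.1 ^ a * p.2 ^ b * Real.exp (b₁ * p.1 ^ 2 + b₂ * p.2 ^ 2)) Dset := by
  apply integrableOn_D (by fun_prop)
  intro p hp
  obtain ⟨h1, h2⟩ := abs_le_one_of_mem hp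
  rw [abs_mul, abs_mul, abs_pow, abs_pow, abs_of_pos (Real.exp_pos _)]
  calc |p.1| ^ a * |p.2| ^ b * Real.exp (b₁ * p.1 ^ 2 + b₂ * p.2 ^ 2) ≤ 1 * 1 * 1 := by
        gcongr
        · exact pow_le_one₀ (abs_nonneg _) h1
        · exact pow_le_one₀ (abs_nonneg _) h2
        · exact exp_le_one hb₁ hb₂ _ _
  _ = 1 := by norm_num

lemma int_abs (hb₁ : b₁ < 0) (hb₂ : b₂ < 0) (a b : ℕ) :
    IntegrableOn (fun p : ℝ × ℝ =>
      |p.1| ^ a * |p.2| ^ b * Real.exp (b₁ * p.1 ^ 2 + b₂ * p.2 ^ 2)) Dset := by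
  apply integrableOn_D (by fun_prop)
  intro p hp
  obtain ⟨h1, h2⟩ := abs_le_one_of_mem hp
  rw [abs_mul, abs_mul, abs_pow, abs_pow, abs_abs, abs_abs, abs_of_pos (Real.exp_pos _)]
  calc |p.1| ^ a * |p.2| ^ b * Real.exp (b₁ * p.1 ^ 2 + b₂ * p.2 ^ 2) ≤ 1 * 1 * 1 := by
        gcongr
        · exact pow_le_one₀ (abs_nonneg _) h1
        · exact pow_le_one₀ (abs_nonneg _) h2
        · exact exp_le_one hb₁ hb₂ _ _
  _ = 1 := by norm_num

lemma even_abs_pow (z : ℝ) (a : ℕ) : |z| ^ (2 * a) = z ^ (2 * a) := by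
  rw [pow_mul, pow_mul, sq_abs]

theorem main (n m : ℕ) (hb₁ : b₁ < 0) (hb₂ : b₂ < 0) :
    HasSum (fun jk : ℕ × ℕ =>
        (((jk.1 + jk.2).choose jk.1 : ℝ) * dd (jk.1 + jk.2)) *
          ∫ p in Dset,
            p.1 ^ (2 * jk.1 + n) * p.2 ^ (2 * jk.2 + m) *
              Real.exp (b₁ * p.1 ^ 2 + b₂ * p.2 ^ 2))
      (∫ p in Dset,
        p.1 ^ n * p.2 ^ m * Real.exp (b₁ * p.1 ^ 2 + b₂ * p.2 ^ 2) /
          Real.sqrt (1 - p.1 ^ 2 - p.2 ^ 2)) := by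
  classical
  set c : ℕ × ℕ → ℝ := fun jk => ((jk.1 + jk.2).choose jk.1 : ℝ) * dd (jk.1 + jk.2) with hc
  set F : ℕ × ℕ → ℝ × ℝ → ℝ := fun jk p =>
    c jk * (p.1 ^ (2 * jk.1 + n) * p.2 ^ (2 * jk.2 + m) *
      Real.exp (b₁ * p.1 ^ 2 + b₂ * p.2 ^ 2)) with hF
  have hcnn : ∀ jk : ℕ × ℕ, 0 ≤ c jk := fun jk =>
    mul_nonneg (Nat.cast_nonneg _) (dd_nonneg _)
  have hFint : ∀ jk : ℕ × ℕ, Integrable (F jk) (volume.restrict Dset) := fun jk =>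
    (int_main hb₁ hb₂ _ _).const_mul _
  have hnorm : ∀ jk : ℕ × ℕ, (fun p : ℝ × ℝ => ‖F jk p‖) = fun p : ℝ × ℝ =>
      c jk * (|p.1| ^ (2 * jk.1 + n) * |p.2| ^ (2 * jk.2 + m) *
        Real.exp (b₁ * p.1 ^ 2 + b₂ * p.2 ^ 2)) := by
    intro jk
    funext p
    rw [hF]
    rw [Real.norm_eq_abs, abs_mul, abs_of_nonneg (hcnn jk), abs_mul, abs_mul,
      abs_pow, abs_pow, abs_of_pos (Real.exp_pos _)]
  have hsummable : Summable fun jk : ℕ × ℕ => ∫ p in Dset, ‖F jk p‖ := by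
    apply summable_of_sum_le
      (c := ∫ p in Dset, 1 / Real.sqrt (1 - p.1 ^ 2 - p.2 ^ 2))
    · exact fun jk => integral_nonneg fun p => norm_nonneg _
    · intro T
      have h1 : ∀ jk ∈ T, (∫ p in Dset, ‖F jk p‖) =
          ∫ p in Dset, c jk * (|p.1| ^ (2 * jk.1 + n) * |p.2| ^ (2 * jk.2 + m) *
            Real.exp (b₁ * p.1 ^ 2 + b₂ * p.2 ^ 2)) := fun jk _ => by rw [hnorm jk]
      rw [Finset.sum_congr rfl h1, ← integral_finset_sum _
        (fun jk _ => (int_abs hb₁ hb₂ _ _).const_mul _)]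
      apply setIntegral_mono_on
        (integrable_finset_sum _ (fun jk _ => (int_abs hb₁ hb₂ _ _).const_mul _)) intK measD
      intro p hp
      have hplt : p.1 ^ 2 + p.2 ^ 2 < 1 := hp
      obtain ⟨hx1, hy1⟩ := abs_le_one_of_mem hp
      have hE1 := exp_le_one hb₁ hb₂ p.1 p.2
      have hEpos := Real.exp_pos (b₁ * p.1 ^ 2 + b₂ * p.2 ^ 2)
      have hterm : ∀ jk : ℕ × ℕ,
          c jk * (|p.1| ^ (2 * jk.1 + n) * |p.2| ^ (2 * jk.2 + m) *
            Real.exp (b₁ * p.1 ^ 2 + b₂ * p.2 ^ 2)) =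
          (c jk * (p.1 ^ (2 * jk.1) * p.2 ^ (2 * jk.2))) *
            (|p.1| ^ n * |p.2| ^ m * Real.exp (b₁ * p.1 ^ 2 + b₂ * p.2 ^ 2)) := by
        intro jk
        rw [pow_add, pow_add, even_abs_pow, even_abs_pow]
        ring
      have hxp : ∀ (z : ℝ) (a : ℕ), 0 ≤ z ^ (2 * a) := fun z a => by
        rw [pow_mul]; positivity
      have hunn : ∀ jk : ℕ × ℕ, 0 ≤ c jk * (p.1 ^ (2 * jk.1) * p.2 ^ (2 * jk.2)) :=
        fun jk => mul_nonneg (hcnn jk) (mul_nonneg (hxp _ _) (hxp _ _))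
      calc ∑ jk ∈ T, c jk * (|p.1| ^ (2 * jk.1 + n) * |p.2| ^ (2 * jk.2 + m) *
            Real.exp (b₁ * p.1 ^ 2 + b₂ * p.2 ^ 2))
          = (∑ jk ∈ T, c jk * (p.1 ^ (2 * jk.1) * p.2 ^ (2 * jk.2))) *
            (|p.1| ^ n * |p.2| ^ m * Real.exp (b₁ * p.1 ^ 2 + b₂ * p.2 ^ 2)) := by
            rw [Finset.sum_mul]
            exact Finset.sum_congr rfl fun jk _ => hterm jk
        _ ≤ (∑ jk ∈ T, c jk * (p.1 ^ (2 * jk.1) * p.2 ^ (2 * jk.2))) * 1 := by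
            apply mul_le_mul_of_nonneg_left _ (Finset.sum_nonneg fun jk _ => hunn jk)
            calc |p.1| ^ n * |p.2| ^ m * Real.exp (b₁ * p.1 ^ 2 + b₂ * p.2 ^ 2)
                ≤ 1 * 1 * 1 := by
                  gcongr
                  · exact pow_le_one₀ (abs_nonneg _) hx1
                  · exact pow_le_one₀ (abs_nonneg _) hy1
              _ = 1 := by norm_num
        _ = ∑ jk ∈ T, c jk * (p.1 ^ (2 * jk.1) * p.2 ^ (2 * jk.2)) := mul_one _
        _ ≤ ∑' jk : ℕ × ℕ, c jk * (p.1 ^ (2 * jk.1) * p.2 ^ (2 * jk.2)) :=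
            Summable.sum_le_tsum T (fun jk _ => hunn jk) (hasSum_prod hplt).summable
        _ = 1 / Real.sqrt (1 - p.1 ^ 2 - p.2 ^ 2) := (hasSum_prod hplt).tsum_eq
  have H := hasSum_integral_of_summable_integral_norm hFint hsummable
  have e1 : (fun jk : ℕ × ℕ => ∫ p in Dset, F jk p) = fun jk : ℕ × ℕ =>
      c jk * ∫ p in Dset, p.1 ^ (2 * jk.1 + n) * p.2 ^ (2 * jk.2 + m) *
        Real.exp (b₁ * p.1 ^ 2 + b₂ * p.2 ^ 2) := by
    funext jk
    rw [hF]
    exact integral_const_mul _ _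
  have e2 : (∫ p in Dset, ∑' jk : ℕ × ℕ, F jk p) = ∫ p in Dset,
      p.1 ^ n * p.2 ^ m * Real.exp (b₁ * p.1 ^ 2 + b₂ * p.2 ^ 2) /
        Real.sqrt (1 - p.1 ^ 2 - p.2 ^ 2) := by
    apply setIntegral_congr_fun measD
    intro p hp
    have hplt : p.1 ^ 2 + p.2 ^ 2 < 1 := hp
    have hs := (hasSum_prod hplt).mul_left
      (p.1 ^ n * p.2 ^ m * Real.exp (b₁ * p.1 ^ 2 + b₂ * p.2 ^ 2))
    have he : (fun jk : ℕ × ℕ =>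
        p.1 ^ n * p.2 ^ m * Real.exp (b₁ * p.1 ^ 2 + b₂ * p.2 ^ 2) *
          (((jk.1 + jk.2).choose jk.1 : ℝ) * dd (jk.1 + jk.2) *
            (p.1 ^ (2 * jk.1) * p.2 ^ (2 * jk.2)))) = fun jk => F jk p := by
      funext jk
      simp only [hF, hc]
      ring
    rw [he] at hs
    dsimp only
    rw [hs.tsum_eq, mul_one_div]
  rw [e1, e2] at H
  exact H

end
end DiskAux

theorem binomial_expansion_and_series_for_disk_integral (n m : ℕ) (b₁ b₂ : ℝ)
    (hb₁ : b₁ < 0) (hb₂ : b₂ < 0) :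
    (∀ (x₁ x₂ : ℝ) (s : ℕ), (x₁ ^ 2 + x₂ ^ 2) ^ s =
      ∑ j ∈ Finset.range (s + 1), (s.choose j : ℝ) * x₁ ^ (2 * j) * x₂ ^ (2 * (s - j))) ∧
    HasSum (fun jk : ℕ × ℕ =>
        (((jk.1 + jk.2).choose jk.1 : ℝ) *
          (((2 * (jk.1 + jk.2) - 1)‼ : ℝ) / ((2 * (jk.1 + jk.2))‼ : ℝ))) *
          ∫ p in {p : ℝ × ℝ | p.1 ^ 2 + p.2 ^ 2 < 1},
            p.1 ^ (2 * jk.1 + n) * p.2 ^ (2 * jk.2 + m) *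
              Real.exp (b₁ * p.1 ^ 2 + b₂ * p.2 ^ 2))
      (∫ p in {p : ℝ × ℝ | p.1 ^ 2 + p.2 ^ 2 < 1},
        p.1 ^ n * p.2 ^ m * Real.exp (b₁ * p.1 ^ 2 + b₂ * p.2 ^ 2) /
          Real.sqrt (1 - p.1 ^ 2 - p.2 ^ 2)) := by
  constructor
  · exact fun x₁ x₂ s => DiskAux.expand x₁ x₂ s
  · have := DiskAux.main n m hb₁ hb₂
    simpa only [DiskAux.dd, DiskAux.Dset] using this
end

section
/- For every natural number m and real b, ∫₀¹ r^m · exp(b·r²) / √(1−r²) dr = (√π/2) · Γ((m+1)/2)/Γ((m+2)/2) · ₁F₁((m+1)/2; (m+2)/2; b). -/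
open Real MeasureTheory

/-- The confluent hypergeometric function `₁F₁(a; c; z)`. -/
noncomputable def hyp1F1 (a c z : ℝ) : ℝ :=
  ∑' k : ℕ, ((ascPochhammer ℝ k).eval a / (ascPochhammer ℝ k).eval c) * z ^ k / (k.factorial : ℝ)

open Set

private lemma myGamma_asc (x : ℝ) (hx : 0 < x) (k : ℕ) :
    Real.Gamma (x + k) = Real.Gamma x * (ascPochhammer ℝ k).eval x := by
  induction k with
  | zero => simp
  | succ n ih =>
    have h : x + (n : ℝ) ≠ 0 := by positivity
    rw [ascPochhammer_succ_eval]
    push_cast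
    rw [show x + ((n : ℝ) + 1) = (x + n) + 1 by ring, Real.Gamma_add_one h, ih]
    ring

private lemma myBetaCongr (u v : ℝ) : ∀ t ∈ Ioc (0:ℝ) 1,
    ((t : ℂ) ^ ((u:ℂ) - 1) * ((1:ℂ) - t) ^ ((v:ℂ) - 1)) = ((t ^ (u-1) * (1-t) ^ (v-1) : ℝ) : ℂ) := by
  intro t ht
  rw [show ((u:ℂ) - 1) = ((u - 1 : ℝ) : ℂ) by push_cast; ring,
    show ((v:ℂ) - 1) = ((v - 1 : ℝ) : ℂ) by push_cast; ring,
    show ((1:ℂ) - t) = ((1 - t : ℝ) : ℂ) by push_cast; ring,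
    ← Complex.ofReal_cpow ht.1.le, ← Complex.ofReal_cpow (by linarith [ht.2] : (0:ℝ) ≤ 1 - t),
    ← Complex.ofReal_mul]

private lemma myRealBeta (u v : ℝ) (hu : 0 < u) (hv : 0 < v) :
    ∫ t in Ioo (0:ℝ) 1, t ^ (u-1) * (1-t) ^ (v-1) =
      Real.Gamma u * Real.Gamma v / Real.Gamma (u+v) := by
  have hB : Complex.betaIntegral u v = ((∫ t in Ioo (0:ℝ) 1, t ^ (u-1) * (1-t) ^ (v-1) : ℝ) : ℂ) := by
    rw [Complex.betaIntegral, intervalIntegral.integral_of_le zero_le_one,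
      setIntegral_congr_fun measurableSet_Ioc (myBetaCongr u v),
      integral_Ioc_eq_integral_Ioo]
    exact integral_ofReal (𝕜 := ℂ)
  have hG := Complex.Gamma_mul_Gamma_eq_betaIntegral (s := (u:ℂ)) (t := (v:ℂ))
    (by simp [hu]) (by simp [hv])
  rw [hB, ← Complex.ofReal_add, Complex.Gamma_ofReal, Complex.Gamma_ofReal,
    Complex.Gamma_ofReal, ← Complex.ofReal_mul, ← Complex.ofReal_mul] at hG
  have h := Complex.ofReal_injective hG
  have hne : Real.Gamma (u + v) ≠ 0 := (Real.Gamma_pos_of_pos (by linarith)).ne'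
  field_simp
  linarith [h]

private lemma myBetaIntegrable (u v : ℝ) (hu : 0 < u) (hv : 0 < v) :
    IntegrableOn (fun t : ℝ => t ^ (u-1) * (1-t) ^ (v-1)) (Ioo 0 1) := by
  have h := Complex.betaIntegral_convergent (u := u) (v := v) (by simp [hu]) (by simp [hv])
  rw [intervalIntegrable_iff_integrableOn_Ioc_of_le zero_le_one] at h
  have h2 : IntegrableOn (fun t : ℝ => ((t ^ (u-1) * (1-t) ^ (v-1) : ℝ) : ℂ)) (Ioc 0 1) :=
    h.congr_fun (myBetaCongr u v) measurableSet_Ioc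
  have h3 : IntegrableOn (fun t : ℝ => t ^ (u-1) * (1-t) ^ (v-1)) (Ioc 0 1) := by
    simpa [IntegrableOn] using h2.re
  exact h3.mono_set Ioo_subset_Ioc_self

private lemma mySqImage : (fun r : ℝ => r ^ 2) '' Ioo 0 1 = Ioo 0 1 := by
  ext t
  constructor
  · rintro ⟨r, ⟨h0, h1⟩, rfl⟩
    simp only
    exact ⟨by positivity, by nlinarith⟩
  · rintro ⟨h0, h1⟩
    exact ⟨Real.sqrt t, ⟨Real.sqrt_pos.2 h0, by
      rw [show (1:ℝ) = Real.sqrt 1 by simp]; exact Real.sqrt_lt_sqrt h0.le h1⟩,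
      Real.sq_sqrt h0.le⟩

private lemma mySqInj : InjOn (fun r : ℝ => r ^ 2) (Ioo 0 1) := fun a ha b hb h => by
  simp only at h
  nlinarith [ha.1, hb.1]

private lemma mySqDeriv : ∀ x ∈ Ioo (0:ℝ) 1,
    HasDerivWithinAt (fun r : ℝ => r ^ 2) (2 * x) (Ioo 0 1) x :=
  fun x _ => by simpa using (hasDerivAt_pow 2 x).hasDerivWithinAt

private lemma myPt (n : ℕ) : ∀ r ∈ Ioo (0:ℝ) 1,
    |2*r| • (((fun r : ℝ => r^2) r) ^ (((n:ℝ)+1)/2-1) * (1-((fun r : ℝ => r^2) r)) ^ ((1:ℝ)/2-1))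
      = 2 * (r ^ n / Real.sqrt (1 - r^2)) := by
  set u : ℝ := ((n:ℝ)+1)/2 with hu
  intro r hr
  have h0 : (0:ℝ) < r := hr.1
  have h1 : (0:ℝ) < 1 - r^2 := by nlinarith [hr.2]
  simp only [smul_eq_mul]
  rw [abs_of_pos (by linarith)]
  have e1 : (r^2 : ℝ) ^ (u-1) = r ^ (2*(u-1)) := by
    rw [← Real.rpow_natCast r 2, ← Real.rpow_mul h0.le]
    norm_num
  have e2 : (1-r^2 : ℝ) ^ ((1:ℝ)/2-1) = (Real.sqrt (1-r^2))⁻¹ := by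
    rw [show (1:ℝ)/2-1 = -(1/2) by norm_num, Real.rpow_neg h1.le, Real.sqrt_eq_rpow]
  have e3 : r * r ^ (2*(u-1)) = r ^ n := by
    have h2u : (2:ℝ)*(u-1) = (n:ℝ) - 1 := by rw [hu]; ring
    rw [h2u]
    calc r * r ^ ((n:ℝ)-1) = r ^ ((1:ℝ) + ((n:ℝ)-1)) := by
          rw [Real.rpow_add h0, Real.rpow_one]
      _ = r ^ n := by rw [show (1:ℝ) + ((n:ℝ)-1) = (n:ℝ) by ring, Real.rpow_natCast]
  rw [e1, e2]
  calc (2*r) * (r ^ (2*(u-1)) * (Real.sqrt (1-r^2))⁻¹)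
      = 2 * ((r * r ^ (2*(u-1))) * (Real.sqrt (1-r^2))⁻¹) := by ring
    _ = 2 * (r^n / Real.sqrt (1-r^2)) := by rw [e3, div_eq_mul_inv]

private lemma myI (n : ℕ) :
    ∫ r in Ioo (0:ℝ) 1, r ^ n / Real.sqrt (1 - r^2) =
      Real.sqrt π / 2 * (Real.Gamma (((n:ℝ)+1)/2) / Real.Gamma (((n:ℝ)+2)/2)) := by
  set u : ℝ := ((n:ℝ)+1)/2 with hu
  have hu0 : 0 < u := by positivity
  have hchg := integral_image_eq_integral_abs_deriv_smul (measurableSet_Ioo)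
      (f' := fun r : ℝ => 2*r) (s := Ioo 0 1) (mySqDeriv) mySqInj
      (fun t => t ^ (u-1) * (1-t) ^ ((1:ℝ)/2-1))
  rw [mySqImage] at hchg
  rw [setIntegral_congr_fun measurableSet_Ioo (myPt n), MeasureTheory.integral_const_mul,
    myRealBeta u (1/2) hu0 (by norm_num), Real.Gamma_one_half_eq,
    show u + 1/2 = ((n:ℝ)+2)/2 by rw [hu]; ring] at hchg
  have hc : Real.Gamma (((n:ℝ)+2)/2) ≠ 0 := (Real.Gamma_pos_of_pos (by positivity)).ne'
  field_simp at hchg ⊢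
  linarith [hchg]

private lemma myIntegrable (n : ℕ) :
    IntegrableOn (fun r : ℝ => r ^ n / Real.sqrt (1 - r^2)) (Ioo 0 1) := by
  set u : ℝ := ((n:ℝ)+1)/2 with hu
  have hu0 : 0 < u := by positivity
  have h := (integrableOn_image_iff_integrableOn_abs_deriv_smul measurableSet_Ioo
      mySqDeriv mySqInj (fun t => t ^ (u-1) * (1-t) ^ ((1:ℝ)/2-1))).mp
    (by rw [mySqImage]; exact myBetaIntegrable u (1/2) hu0 (by norm_num))
  have h2 : IntegrableOn (fun r : ℝ => 2 * (r ^ n / Real.sqrt (1 - r^2))) (Ioo 0 1) :=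
    h.congr_fun (myPt n) measurableSet_Ioo
  have h3 := h2.const_mul (2⁻¹ : ℝ)
  exact IntegrableOn.congr_fun h3 (fun r _ => by ring) measurableSet_Ioo

theorem integral_pow_exp_sq_div_sqrt (m : ℕ) (b : ℝ) :
    ∫ r in Set.Ioo (0 : ℝ) 1, r ^ m * Real.exp (b * r ^ 2) / Real.sqrt (1 - r ^ 2) =
      (Real.sqrt π / 2) * (Real.Gamma ((m + 1) / 2) / Real.Gamma ((m + 2) / 2)) *
        hyp1F1 ((m + 1) / 2) ((m + 2) / 2) b := by
  set F : ℕ → ℝ → ℝ := fun k r => b^k / (k.factorial : ℝ) * (r^(m+2*k) / Real.sqrt (1-r^2))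
    with hF
  have hFint : ∀ k, IntegrableOn (F k) (Ioo 0 1) := fun k =>
    (myIntegrable (m+2*k)).const_mul _
  have hnorm : ∀ k, (∫ r in Ioo (0:ℝ) 1, ‖F k r‖) =
      |b|^k / (k.factorial : ℝ) * ∫ r in Ioo (0:ℝ) 1, r^(m+2*k) / Real.sqrt (1-r^2) := by
    intro k
    rw [← MeasureTheory.integral_const_mul]
    apply setIntegral_congr_fun measurableSet_Ioo
    intro r hr
    have h0 : (0:ℝ) < r := hr.1
    rw [hF]
    simp only [Real.norm_eq_abs, abs_mul]
    congr 1
    · rw [abs_div, abs_pow, Nat.abs_cast]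
    · exact abs_of_nonneg (div_nonneg (pow_nonneg h0.le _) (Real.sqrt_nonneg _))
  have hsum : Summable (fun k => ∫ r in Ioo (0:ℝ) 1, ‖F k r‖) := by
    apply Summable.of_nonneg_of_le (fun k => integral_nonneg (fun r => norm_nonneg _))
      (fun k => ?_)
      ((Real.summable_pow_div_factorial |b|).mul_right
        (∫ r in Ioo (0:ℝ) 1, r^m / Real.sqrt (1-r^2)))
    rw [hnorm k]
    have hle : (∫ r in Ioo (0:ℝ) 1, r^(m+2*k) / Real.sqrt (1-r^2)) ≤
        ∫ r in Ioo (0:ℝ) 1, r^m / Real.sqrt (1-r^2) := by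
      apply setIntegral_mono_on (myIntegrable _) (myIntegrable m) measurableSet_Ioo
      intro r hr
      have h1 : 0 < Real.sqrt (1-r^2) := Real.sqrt_pos.2 (by nlinarith [hr.1, hr.2])
      rw [div_le_div_iff_of_pos_right h1]
      exact pow_le_pow_of_le_one hr.1.le hr.2.le (Nat.le_add_right _ _)
    exact mul_le_mul_of_nonneg_left hle (by positivity)
  have key := integral_tsum_of_summable_integral_norm (fun k => hFint k) hsum
  have hpt : ∀ r ∈ Ioo (0:ℝ) 1,
      (∑' k, F k r) = r ^ m * Real.exp (b * r ^ 2) / Real.sqrt (1 - r ^ 2) := by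
    intro r hr
    have h1 : Real.sqrt (1-r^2) ≠ 0 := (Real.sqrt_pos.2 (by nlinarith [hr.1, hr.2])).ne'
    have hterm : ∀ k, F k r = (r^m / Real.sqrt (1-r^2)) * ((b*r^2)^k / (k.factorial : ℝ)) := by
      intro k
      rw [hF]
      simp only [mul_pow, pow_add, pow_mul]
      field_simp
    rw [tsum_congr hterm, tsum_mul_left, Real.exp_eq_exp_ℝ, NormedSpace.exp_eq_tsum_div]
    ring
  rw [← setIntegral_congr_fun measurableSet_Ioo hpt, ← key]
  have hc0 : (0:ℝ) < ((m:ℝ)+2)/2 := by positivity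
  have ha0 : (0:ℝ) < ((m:ℝ)+1)/2 := by positivity
  have hIk : ∀ k : ℕ, (∫ r in Ioo (0:ℝ) 1, F k r) =
      Real.sqrt π / 2 * (Real.Gamma (((m:ℝ)+1)/2) / Real.Gamma (((m:ℝ)+2)/2)) *
        (((ascPochhammer ℝ k).eval (((m:ℝ)+1)/2) / (ascPochhammer ℝ k).eval (((m:ℝ)+2)/2)) *
          b ^ k / (k.factorial : ℝ)) := by
    intro k
    rw [hF]
    rw [MeasureTheory.integral_const_mul, myI (m+2*k),
      show (((m+2*k : ℕ):ℝ)+1)/2 = ((m:ℝ)+1)/2 + k by push_cast; ring,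
      show (((m+2*k : ℕ):ℝ)+2)/2 = ((m:ℝ)+2)/2 + k by push_cast; ring,
      myGamma_asc _ ha0, myGamma_asc _ hc0]
    have hGc : Real.Gamma (((m:ℝ)+2)/2) ≠ 0 := (Real.Gamma_pos_of_pos hc0).ne'
    have hpk : ((ascPochhammer ℝ k).eval (((m:ℝ)+2)/2)) ≠ 0 :=
      (ascPochhammer_pos k _ hc0).ne'
    have hk : ((k.factorial : ℝ)) ≠ 0 := Nat.cast_ne_zero.2 k.factorial_ne_zero
    field_simp
  rw [tsum_congr hIk, tsum_mul_left, hyp1F1]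
end

section
/- Let Q be a nonzero real symmetric 3×3 matrix with trace zero, and define the biaxiality μ = 1 − 6·(tr Q³)²/(tr Q²)³. Then 0 ≤ μ ≤ 1, and μ = 0 if and only if Q has two equal eigenvalues (counted over its three eigenvalues). -/
open Matrix

lemma trace_pow_eq_sum_eigenvalues (Q : Matrix (Fin 3) (Fin 3) ℝ)
    (hQ : Q.IsHermitian) (k : ℕ) :
    (Q ^ k).trace = ∑ i, hQ.eigenvalues i ^ k := by
  set U : Matrix (Fin 3) (Fin 3) ℝ := (hQ.eigenvectorUnitary : Matrix (Fin 3) (Fin 3) ℝ)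
  set D : Matrix (Fin 3) (Fin 3) ℝ := diagonal (RCLike.ofReal ∘ hQ.eigenvalues)
  have hU : star U * U = 1 := (Matrix.mem_unitaryGroup_iff').mp hQ.eigenvectorUnitary.2
  have hspec : Q = U * D * star U := hQ.spectral_theorem
  have hpow : Q ^ k = U * D ^ k * star U := by
    induction k with
    | zero =>
      have hU' : U * star U = 1 := (Matrix.mem_unitaryGroup_iff).mp hQ.eigenvectorUnitary.2
      simp only [pow_zero, Matrix.mul_one]
      rw [hU']
    | succ n ih =>
      rw [pow_succ, ih, hspec, pow_succ]
      simp only [Matrix.mul_assoc]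
      rw [← Matrix.mul_assoc (star U) U (D * star U), hU, Matrix.one_mul]
  rw [hpow, Matrix.trace_mul_cycle, hU, Matrix.one_mul]
  simp [D, Matrix.diagonal_pow, Matrix.trace_diagonal]

theorem biaxiality_bounds_and_uniaxial_iff (Q : Matrix (Fin 3) (Fin 3) ℝ)
    (hQ : Q.IsHermitian) (hQ0 : Q ≠ 0) (htr : Q.trace = 0) :
    0 ≤ 1 - 6 * (Q ^ 3).trace ^ 2 / (Q ^ 2).trace ^ 3 ∧
    1 - 6 * (Q ^ 3).trace ^ 2 / (Q ^ 2).trace ^ 3 ≤ 1 ∧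
    (1 - 6 * (Q ^ 3).trace ^ 2 / (Q ^ 2).trace ^ 3 = 0 ↔
      ∃ i j : Fin 3, i ≠ j ∧ hQ.eigenvalues i = hQ.eigenvalues j) := by
  set a := hQ.eigenvalues 0 with ha
  set b := hQ.eigenvalues 1 with hb
  set c := hQ.eigenvalues 2 with hc
  have h1 : a + b + c = 0 := by
    have := trace_pow_eq_sum_eigenvalues Q hQ 1
    rw [pow_one, htr] at this
    simpa [Fin.sum_univ_three, ha, hb, hc] using this.symm
  have h2 : (Q ^ 2).trace = a ^ 2 + b ^ 2 + c ^ 2 := by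
    rw [trace_pow_eq_sum_eigenvalues Q hQ 2]; simp [Fin.sum_univ_three, ha, hb, hc]
  have h3 : (Q ^ 3).trace = a ^ 3 + b ^ 3 + c ^ 3 := by
    rw [trace_pow_eq_sum_eigenvalues Q hQ 3]; simp [Fin.sum_univ_three, ha, hb, hc]
  -- p > 0
  have hev : ∃ i, hQ.eigenvalues i ≠ 0 := by
    by_contra h
    push_neg at h
    apply hQ0
    have hz : hQ.eigenvalues = 0 := funext h
    have := hQ.spectral_theorem
    rwa [hz, Pi.comp_zero, RCLike.ofReal_zero,
      (by rfl : Function.const (Fin 3) (0 : ℝ) = fun _ ↦ 0),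
      diagonal_zero, map_zero] at this
  have hp : 0 < a ^ 2 + b ^ 2 + c ^ 2 := by
    obtain ⟨i, hi⟩ := hev
    fin_cases i
    · have h0 : a ≠ 0 := hi
      nlinarith [sq_nonneg b, sq_nonneg c, pow_pos (abs_pos.mpr h0) 2, sq_abs a]
    · have h0 : b ≠ 0 := hi
      nlinarith [sq_nonneg a, sq_nonneg c, pow_pos (abs_pos.mpr h0) 2, sq_abs b]
    · have h0 : c ≠ 0 := hi
      nlinarith [sq_nonneg a, sq_nonneg b, pow_pos (abs_pos.mpr h0) 2, sq_abs c]
  have hp3 : 0 < (a ^ 2 + b ^ 2 + c ^ 2) ^ 3 := by positivity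
  -- key identity
  have key : (a ^ 2 + b ^ 2 + c ^ 2) ^ 3 - 6 * (a ^ 3 + b ^ 3 + c ^ 3) ^ 2
      = 2 * ((a - b) * (a - c) * (b - c)) ^ 2 := by
    have hcc : c = -a - b := by linarith
    rw [hcc]; ring
  rw [h2, h3]
  set p := a ^ 2 + b ^ 2 + c ^ 2
  set q := a ^ 3 + b ^ 3 + c ^ 3
  have hle : 6 * q ^ 2 ≤ p ^ 3 := by nlinarith [sq_nonneg ((a - b) * (a - c) * (b - c))]
  refine ⟨?_, ?_, ?_⟩
  · have : 6 * q ^ 2 / p ^ 3 ≤ 1 := (div_le_one hp3).mpr hle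
    linarith
  · have : 0 ≤ 6 * q ^ 2 / p ^ 3 := by positivity
    linarith
  · constructor
    · intro h
      have hq : 6 * q ^ 2 = p ^ 3 := by
        field_simp at h
        linarith
      have hzero : ((a - b) * (a - c) * (b - c)) ^ 2 = 0 := by linarith [key]
      have := pow_eq_zero_iff (n := 2) (by norm_num) |>.mp hzero
      rcases mul_eq_zero.mp this with h' | hbc
      · rcases mul_eq_zero.mp h' with hab | hac
        · exact ⟨0, 1, by decide, by rw [← ha, ← hb]; linarith⟩
        · exact ⟨0, 2, by decide, by rw [← ha, ← hc]; linarith⟩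
      · exact ⟨1, 2, by decide, by rw [← hb, ← hc]; linarith⟩
    · rintro ⟨i, j, hij, heq⟩
      have hprod : (a - b) * (a - c) * (b - c) = 0 := by
        fin_cases i <;> fin_cases j <;> simp_all [ha, hb, hc] <;>
          first
            | (left; left; linarith)
            | (left; right; linarith)
            | (right; linarith)
      have hq : 6 * q ^ 2 = p ^ 3 := by
        have : ((a - b) * (a - c) * (b - c)) ^ 2 = 0 := by rw [hprod]; ring
        linarith [key]
      rw [hq, div_self (ne_of_gt hp3)]
      ring
end
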